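/- Let f : ℝ → ℝ be 1-periodic with 0 ≤ f(x) ≤ 3/20 for all x, Lipschitz with |f(x)−f(y)| ≤ (3/10)·|x−y| for all x,y, with min f = 0, and suppose L := ∫₀¹ f(x) dx satisfies 0 < L < 3/40. Then ∫₀¹ ∫_ℝ λ(f(x), f(y), x−y) dy dx ≥ L⁶/20. -/

import Mathlib

open MeasureTheory Set

/-- `λ(a,b,c) := (a+b)²·(a−b)² / (2·(c² + (a+b)²)·(c² + (a−b)²))`. -/
noncomputable def lam (a b c : ℝ) : ℝ :=
  (a + b) ^ 2 * (a - b) ^ 2 / (2 * (c ^ 2 + (a + b) ^ 2) * (c ^ 2 + (a - b) ^ 2))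

private lemma lam_nonneg (a b c : ℝ) : 0 ≤ lam a b c := by unfold lam; positivity

private lemma lam_le (a b c : ℝ) (ha0 : 0 ≤ a) (ha1 : a ≤ 3/20) (hb0 : 0 ≤ b) (hb1 : b ≤ 3/20) :
    lam a b c ≤ 2 * (1 + c ^ 2)⁻¹ := by
  have h1 : (0:ℝ) < 1 + c ^ 2 := by positivity
  rw [show (2:ℝ) * (1 + c ^ 2)⁻¹ = 2 / (1 + c^2) by ring]
  unfold lam
  rcases eq_or_lt_of_le (show (0:ℝ) ≤ 2 * (c ^ 2 + (a + b) ^ 2) * (c ^ 2 + (a - b) ^ 2) by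
    positivity) with h | h
  · rw [← h, div_zero]; positivity
  · rw [div_le_div_iff₀ h h1]
    have hP : (a+b)^2 ≤ 9/100 := by nlinarith
    have hkey : (a+b)^2 * ((a-b)^2 * c^2) ≤ 9/100 * ((a-b)^2 * c^2) :=
      mul_le_mul_of_nonneg_right hP (by positivity)
    nlinarith [hkey, sq_nonneg (c^2), mul_nonneg (sq_nonneg (a-b)) (sq_nonneg c),
      mul_nonneg (sq_nonneg (a+b)) (sq_nonneg c),
      mul_nonneg (sq_nonneg (a+b)) (sq_nonneg (a-b))]

set_option maxHeartbeats 1000000 in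
private lemma lam_ge (L a b c : ℝ) (hL0 : 0 < L) (hL1 : L < 3/40)
    (ha : L/2 ≤ a) (ha1 : a ≤ 3/20) (hb0 : 0 ≤ b) (hb1 : b ≤ L/4)
    (hc : c^2 ≤ (9/16)^2) :
    3 * L^4 / 160 ≤ lam a b c := by
  have hab1 : L/2 ≤ a + b := by linarith
  have hab2 : a + b ≤ 3/10 := by linarith
  have hmb1 : L/4 ≤ a - b := by linarith
  have hmb2 : a - b ≤ 3/20 := by linarith
  have hD1 : c^2 + (a+b)^2 ≤ 2601/6400 := by nlinarith
  have hD2 : c^2 + (a-b)^2 ≤ 2169/6400 := by nlinarith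
  have h3 : L^2/4 ≤ (a+b)^2 := by nlinarith
  have h4 : L^2/16 ≤ (a-b)^2 := by nlinarith
  have p1 : (0:ℝ) < c^2 + (a+b)^2 := by nlinarith [sq_nonneg c]
  have p2 : (0:ℝ) < c^2 + (a-b)^2 := by nlinarith [sq_nonneg c]
  have hDpos : (0:ℝ) < 2 * (c ^ 2 + (a + b) ^ 2) * (c ^ 2 + (a - b) ^ 2) := by
    nlinarith [mul_pos p1 p2]
  unfold lam
  rw [le_div_iff₀ hDpos]
  have hprod : (c^2+(a+b)^2) * (c^2+(a-b)^2) ≤ (2601/6400) * (2169/6400) :=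
    mul_le_mul hD1 hD2 (le_of_lt p2) (by norm_num)
  have hprod2 : L^2/4 * (L^2/16) ≤ (a+b)^2 * (a-b)^2 :=
    mul_le_mul h3 h4 (by positivity) (by positivity)
  have hscaled : 3 * L^4 / 160 * (2 * ((c^2+(a+b)^2) * (c^2+(a-b)^2)))
      ≤ 3 * L^4 / 160 * (2 * ((2601/6400) * (2169/6400))) := by
    apply mul_le_mul_of_nonneg_left (by linarith) (by positivity)
  have hL4 : (0:ℝ) < L^4 := pow_pos hL0 4
  have e2 : 3*L^4/160*(2*((2601/6400:ℝ)*(2169/6400))) ≤ L^4/64 := by nlinarith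
  have e3 : L^4/64 = L^2/4*(L^2/16) := by ring
  calc 3 * L^4 / 160 * (2 * (c ^ 2 + (a + b) ^ 2) * (c ^ 2 + (a - b) ^ 2))
      = 3 * L^4 / 160 * (2 * ((c^2+(a+b)^2) * (c^2+(a-b)^2))) := by ring
    _ ≤ 3*L^4/160*(2*((2601/6400)*(2169/6400))) := hscaled
    _ ≤ L^4/64 := e2
    _ = L^2/4*(L^2/16) := e3
    _ ≤ (a+b)^2 * (a-b)^2 := hprod2

/-- Lower bound on the dissipation functional for a 1-periodic interface with small slope,
values in `[0, 3/20]`, minimum `0`, and mean `L ∈ (0, 3/40)`. -/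
theorem dissipation_lower_bound
    (f : ℝ → ℝ)
    (hper : ∀ x, f (x + 1) = f x)
    (hbd : ∀ x, 0 ≤ f x ∧ f x ≤ 3 / 20)
    (hlip : ∀ x y : ℝ, |f x - f y| ≤ (3 / 10) * |x - y|)
    (hmin : ∃ x₀, f x₀ = 0)
    (L : ℝ) (hL : L = ∫ x in (0:ℝ)..1, f x)
    (hL0 : 0 < L) (hL1 : L < 3 / 40) :
    L ^ 6 / 20 ≤ ∫ x in (0:ℝ)..1, (∫ y : ℝ, lam (f x) (f y) (x - y)) := by
  obtain ⟨x₀, hx₀⟩ := hmin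
  have hcont : Continuous f := by
    have : LipschitzWith (3/10 : NNReal) f := by
      apply LipschitzWith.of_dist_le_mul
      intro x y
      simpa [Real.dist_eq] using hlip x y
    exact this.continuous
  have hmf : Measurable f := hcont.measurable
  have hperZ : ∀ (n : ℤ) (x : ℝ), f (x + n) = f x := by
    intro n x
    have h := (Function.Periodic.int_mul hper n) x
    simpa using h
  have hlam_meas : Measurable (fun p : ℝ × ℝ => lam (f p.1) (f p.2) (p.1 - p.2)) := by
    unfold lam; fun_prop
  have hdom : ∀ x : ℝ, Integrable (fun y : ℝ => 2 * (1 + (x - y) ^ 2)⁻¹) :=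
    fun x => ((integrable_comp_sub_left (fun z : ℝ => (1 + z ^ 2)⁻¹) x).2
      integrable_inv_one_add_sq).const_mul 2
  have hInt : ∀ x : ℝ, Integrable (fun y => lam (f x) (f y) (x - y)) := by
    intro x
    have hmy : Measurable fun y => lam (f x) (f y) (x - y) := by unfold lam; fun_prop
    refine (hdom x).mono' hmy.aestronglyMeasurable ?_
    filter_upwards with y
    rw [Real.norm_eq_abs, abs_of_nonneg (lam_nonneg _ _ _)]
    exact lam_le _ _ _ (hbd x).1 (hbd x).2 (hbd y).1 (hbd y).2
  set I : ℝ → ℝ := fun x => ∫ y, lam (f x) (f y) (x - y) with hI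
  have hInonneg : ∀ x, 0 ≤ I x := fun x => integral_nonneg fun y => lam_nonneg _ _ _
  have hIle : ∀ x, I x ≤ 8 := by
    intro x
    have h1 : I x ≤ ∫ y, 2 * (1 + (x - y) ^ 2)⁻¹ := by
      apply integral_mono (hInt x) (hdom x)
      intro y
      exact lam_le _ _ _ (hbd x).1 (hbd x).2 (hbd y).1 (hbd y).2
    have h2 : (∫ y : ℝ, 2 * (1 + (x - y) ^ 2)⁻¹) = 2 * Real.pi := by
      rw [MeasureTheory.integral_const_mul,
        integral_sub_left_eq_self (fun z : ℝ => (1 + z ^ 2)⁻¹) volume x,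
        integral_univ_inv_one_add_sq]
    have := Real.pi_le_four
    linarith
  have hImeas : StronglyMeasurable I := hlam_meas.stronglyMeasurable.integral_prod_right'
  -- Claim B : pointwise lower bound
  have claimB : ∀ x : ℝ, L/2 ≤ f x → (L/2)^5 ≤ I x := by
    intro x hx
    set n : ℤ := round (x - x₀) with hn
    set z : ℝ := x₀ + n with hz
    have hfz : f z = 0 := by rw [hz, hperZ n x₀, hx₀]
    have hxz : |x - z| ≤ 1/2 := by
      have h := abs_sub_round (x - x₀)
      have e : x - z = x - x₀ - n := by rw [hz]; ring
      rw [e, hn]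
      exact h
    set r : ℝ := 5*L/6 with hr
    have hr0 : 0 < r := by rw [hr]; linarith
    have hrle : r ≤ 1/16 := by rw [hr]; linarith
    have hS : ∀ y ∈ Icc (z - r) (z + r), f y ≤ L/4 ∧ (x - y)^2 ≤ (9/16)^2 := by
      intro y hy
      have hyz : |y - z| ≤ r := by
        rw [abs_le]; constructor <;> [linarith [hy.1]; linarith [hy.2]]
      constructor
      · have h5 := hlip y z
        rw [hfz, sub_zero] at h5
        have h2 : |f y| ≤ 3/10 * r :=
          h5.trans (by apply mul_le_mul_of_nonneg_left hyz; norm_num)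
        have h6 : f y ≤ 3/10 * r := (le_abs_self _).trans h2
        rw [hr] at h6; linarith
      · have h3 : |x - y| ≤ 9/16 := by
          have e : x - y = (x - z) - (y - z) := by ring
          rw [e]
          calc |(x - z) - (y - z)| ≤ |x - z| + |y - z| := abs_sub _ _
            _ ≤ 1/2 + 1/16 := by linarith
            _ = 9/16 := by norm_num
        calc (x - y)^2 = |x - y|^2 := (sq_abs _).symm
          _ ≤ (9/16)^2 := by apply pow_le_pow_left₀ (abs_nonneg _) h3
    have hvol : (volume (Icc (z - r) (z + r))).toReal = 2 * r := by
      rw [Real.volume_Icc, ENNReal.toReal_ofReal (by linarith)]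
      ring
    have step1 : 3 * L^4/160 * (2*r) ≤ ∫ y in Icc (z - r) (z + r), lam (f x) (f y) (x - y) := by
      rw [← hvol]
      apply setIntegral_ge_of_const_le_real measurableSet_Icc
      · rw [Real.volume_Icc]; exact ENNReal.ofReal_ne_top
      · intro y hy
        exact lam_ge L (f x) (f y) (x - y) hL0 hL1 hx (hbd x).2 (hbd y).1 (hS y hy).1 (hS y hy).2
      · exact (hInt x).integrableOn
    have step2 : (∫ y in Icc (z - r) (z + r), lam (f x) (f y) (x - y)) ≤ I x :=
      setIntegral_le_integral (hInt x) (ae_of_all _ fun y => lam_nonneg _ _ _)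
    have e : (L/2)^5 = 3 * L^4/160 * (2*r) := by rw [hr]; ring
    linarith
  -- measure of the good set
  set T : Set ℝ := Ioc (0:ℝ) 1 with hT
  set A : Set ℝ := {x : ℝ | L/2 ≤ f x} with hA
  have hAmeas : MeasurableSet A := measurableSet_le measurable_const hmf
  have hTA_meas : MeasurableSet (T ∩ A) := measurableSet_Ioc.inter hAmeas
  have hTdA_meas : MeasurableSet (T \ A) := measurableSet_Ioc.diff hAmeas
  have hTA_fin : volume (T ∩ A) ≤ 1 := by
    calc volume (T ∩ A) ≤ volume T := measure_mono inter_subset_left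
      _ = 1 := by rw [hT, Real.volume_Ioc]; norm_num
  have hTdA_fin : volume (T \ A) ≤ 1 := by
    calc volume (T \ A) ≤ volume T := measure_mono diff_subset
      _ = 1 := by rw [hT, Real.volume_Ioc]; norm_num
  have hfT : IntegrableOn f T := hcont.integrableOn_Ioc
  have hLT : L = ∫ x in T, f x := by
    rw [hL, intervalIntegral.integral_of_le (by norm_num : (0:ℝ) ≤ 1)]
  set m : ℝ := (volume (T ∩ A)).toReal with hm
  have hm0 : 0 ≤ m := ENNReal.toReal_nonneg
  have hmeasA : 5*L/3 ≤ m := by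
    have hdisj : Disjoint (T ∩ A) (T \ A) := Set.disjoint_sdiff_right.mono_left inter_subset_right
    have hsplit : (∫ x in T, f x) = (∫ x in T ∩ A, f x) + ∫ x in T \ A, f x := by
      rw [← setIntegral_union hdisj hTdA_meas (hfT.mono_set inter_subset_left)
        (hfT.mono_set diff_subset), Set.inter_union_diff]
    have hb1 : (∫ x in T ∩ A, f x) ≤ 3/20 * m := by
      have step : (∫ x in T ∩ A, f x) ≤ ∫ _x in T ∩ A, (3/20:ℝ) := by
        apply setIntegral_mono_on (hfT.mono_set inter_subset_left) _ hTA_meas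
          (fun x _ => (hbd x).2)
        exact integrableOn_const (lt_of_le_of_lt hTA_fin (by norm_num)).ne
      have e : (∫ _x in T ∩ A, (3/20:ℝ)) = 3/20 * m := by
        rw [setIntegral_const, smul_eq_mul, mul_comm]; rfl
      linarith
    have htd : (volume (T \ A)).toReal ≤ 1 := by
      have h := ENNReal.toReal_mono (by norm_num : (1:ENNReal) ≠ ⊤) hTdA_fin
      simpa using h
    have hb2 : (∫ x in T \ A, f x) ≤ L/2 := by
      have step : (∫ x in T \ A, f x) ≤ ∫ _x in T \ A, (L/2:ℝ) := by
        apply setIntegral_mono_on (hfT.mono_set diff_subset) _ hTdA_meas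
          (fun x hx => le_of_lt (lt_of_not_ge hx.2))
        exact integrableOn_const (lt_of_le_of_lt hTdA_fin (by norm_num)).ne
      have e : (∫ _x in T \ A, (L/2:ℝ)) = (volume (T \ A)).toReal * (L/2) := by
        rw [setIntegral_const, smul_eq_mul]; rfl
      have e2 : (volume (T \ A)).toReal * (L/2) ≤ L/2 := by nlinarith
      linarith
    linarith [hLT, hsplit, hb1, hb2]
  -- final chain
  have hIintT : IntegrableOn I T := by
    apply Integrable.mono' (integrable_const (8:ℝ)) hImeas.aestronglyMeasurable.restrict
    filter_upwards with x
    rw [Real.norm_eq_abs, abs_of_nonneg (hInonneg x)]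
    exact hIle x
  have c1 : (∫ x in (0:ℝ)..1, I x) = ∫ x in T, I x := by
    rw [intervalIntegral.integral_of_le (by norm_num : (0:ℝ) ≤ 1)]
  have c2 : (∫ x in T ∩ A, I x) ≤ ∫ x in T, I x := by
    apply setIntegral_mono_set hIintT (ae_of_all _ hInonneg)
    exact HasSubset.Subset.eventuallyLE inter_subset_left
  have c3 : (L/2)^5 * m ≤ ∫ x in T ∩ A, I x := by
    apply setIntegral_ge_of_const_le_real hTA_meas (lt_of_le_of_lt hTA_fin (by norm_num)).ne
    · intro x hx
      exact claimB x hx.2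
    · exact hIintT.mono_set inter_subset_left
  have final : L^6/20 ≤ (L/2)^5 * (5*L/3) := by nlinarith [pow_pos hL0 5, pow_pos hL0 6]
  have hmono : (L/2)^5 * (5*L/3) ≤ (L/2)^5 * m := by
    apply mul_le_mul_of_nonneg_left hmeasA (by positivity)
  rw [c1]
  linarith
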